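/- Let ρ ∈ (0,1) and R > 1. Suppose φ is holomorphic on the open disk of radius R, satisfies φ(0) = 0 and φ(1) = 1, and its image avoids the two vertical rays i[ρ, ∞) and i(−∞, −ρ] (i.e., φ(D_R) ⊆ ℂ \ (i[ρ,∞) ∪ i(−∞,−ρ])). Then (1/2)·log(1 + ρ^{−2}) ≤ log((R+1)/(R−1)). -/

import Mathlib

/-- Optimality of the wedge mapping: if `φ` is holomorphic on the disk of radius `R > 1`
with `φ 0 = 0`, `φ 1 = 1`, and its image avoids the vertical rays `i[ρ,∞)` and
`i(-∞,-ρ]` with `ρ ∈ (0,1)`, then `(1/2) log(1 + ρ⁻²) ≤ log((R+1)/(R-1))`. -/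
theorem wedge_mapping_optimality (φ : ℂ → ℂ) (ρ R : ℝ)
    (hρ0 : 0 < ρ) (hρ1 : ρ < 1) (hR : 1 < R)
    (hφ : DifferentiableOn ℂ φ (Metric.ball (0 : ℂ) R))
    (h0 : φ 0 = 0) (h1 : φ 1 = 1)
    (havoid : ∀ z ∈ Metric.ball (0 : ℂ) R, ∀ b : ℝ, ρ ≤ |b| → φ z ≠ Complex.I * b) :
    (1 / 2) * Real.log (1 + 1 / ρ ^ 2) ≤ Real.log ((R + 1) / (R - 1)) := by
  have hρC : (ρ : ℂ) ≠ 0 := by exact_mod_cast hρ0.ne'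
  have hρ2 : (0:ℝ) < ρ ^ 2 := by positivity
  set ψ : ℂ → ℂ := fun z => 1 + (φ z / (ρ:ℂ)) ^ 2 with hψdef
  -- ψ maps the ball into the slit plane
  have hslit : ∀ z ∈ Metric.ball (0:ℂ) R, ψ z ∈ Complex.slitPlane := by
    intro z hz
    rw [Complex.mem_slitPlane_iff]
    by_contra hcon
    push_neg at hcon
    obtain ⟨hre, him⟩ := hcon
    set a := (φ z).re with ha
    set b := (φ z).im with hb
    have key : ((ρ^2 : ℝ) : ℂ) * ψ z = ((ρ^2 : ℝ) : ℂ) + (φ z) ^ 2 := by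
      simp only [hψdef]
      push_cast
      field_simp
    have keyre : ρ^2 * (ψ z).re = ρ^2 + (a*a - b*b) := by
      have := congrArg Complex.re key
      simpa [Complex.add_re, Complex.mul_re, pow_two, ← ha, ← hb] using this
    have keyim : ρ^2 * (ψ z).im = a*b + b*a := by
      have := congrArg Complex.im key
      simpa [Complex.add_im, Complex.mul_im, pow_two, ← ha, ← hb] using this
    rw [him, mul_zero] at keyim
    have hab : a * b = 0 := by linarith
    have hb2 : ρ^2 + a*a ≤ b*b := by nlinarith [mul_nonpos_of_nonneg_of_nonpos (le_of_lt hρ2) hre]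
    have hbne : b ≠ 0 := by
      intro h; rw [h] at hb2; nlinarith
    have ha0 : a = 0 := by
      rcases mul_eq_zero.mp hab with h | h
      · exact h
      · exact absurd h hbne
    have hρb : ρ ≤ |b| := by
      by_contra hlt
      push_neg at hlt
      have : b * b < ρ ^ 2 := by nlinarith [abs_nonneg b, le_abs_self b, neg_abs_le b, sq_abs b]
      nlinarith
    exact havoid z hz b hρb (by
      apply Complex.ext <;>
        simp [Complex.mul_re, Complex.mul_im, ← ha, ← hb, ha0])
  have hψ0 : ∀ z ∈ Metric.ball (0:ℂ) R, ψ z ≠ 0 := fun z hz =>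
    Complex.slitPlane_ne_zero (hslit z hz)
  -- ψ is holomorphic
  have hψdiff : DifferentiableOn ℂ ψ (Metric.ball (0:ℂ) R) := by
    apply (differentiableOn_const (1:ℂ)).add
    exact (hφ.div_const _).pow 2
  -- the square root g
  set g : ℂ → ℂ := fun z => ψ z ^ (2⁻¹ : ℂ) with hgdef
  have hgdiff : DifferentiableOn ℂ g (Metric.ball (0:ℂ) R) :=
    hψdiff.cpow (differentiableOn_const _) (fun z hz => hslit z hz)
  -- g has positive real part
  have hgre : ∀ z ∈ Metric.ball (0:ℂ) R, 0 < (g z).re := by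
    intro z hz
    rw [hgdef]
    simp only
    rw [Complex.cpow_inv_two_re]
    apply Real.sqrt_pos.mpr
    have hslit' := hslit z hz
    rw [Complex.mem_slitPlane_iff] at hslit'
    have h1' : |(ψ z).re| ≤ ‖ψ z‖ := Complex.abs_re_le_norm _
    have h2' : ‖ψ z‖ ^ 2 = (ψ z).re ^ 2 + (ψ z).im ^ 2 := by
      rw [Complex.sq_norm, Complex.normSq_apply]; ring
    rcases hslit' with h | h
    · nlinarith [abs_nonneg ((ψ z).re), neg_abs_le ((ψ z).re)]
    · have him2 : 0 < (ψ z).im ^ 2 := by positivity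
      have : |(ψ z).re| < ‖ψ z‖ := by
        nlinarith [norm_nonneg (ψ z), abs_nonneg ((ψ z).re), sq_abs ((ψ z).re)]
      nlinarith [neg_abs_le ((ψ z).re)]
  have hgne : ∀ z ∈ Metric.ball (0:ℂ) R, g z + 1 ≠ 0 := by
    intro z hz h
    have := congrArg Complex.re h
    simp only [Complex.add_re, Complex.one_re, Complex.zero_re] at this
    have := hgre z hz
    linarith
  -- the Möbius transform h
  set h : ℂ → ℂ := fun z => (g z - 1) / (g z + 1) with hhdef
  have hhdiff : DifferentiableOn ℂ h (Metric.ball (0:ℂ) R) :=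
    ((hgdiff.sub (differentiableOn_const 1)).div
      (hgdiff.add (differentiableOn_const 1)) (fun z hz => hgne z hz))
  have hball : (0:ℂ) ∈ Metric.ball (0:ℂ) R := by
    simp [Metric.mem_ball]; linarith
  have h1ball : (1:ℂ) ∈ Metric.ball (0:ℂ) R := by
    simp [Metric.mem_ball]; linarith
  have hh0 : h 0 = 0 := by
    have hψ0' : ψ 0 = 1 := by simp [hψdef, h0]
    simp [hhdef, hgdef, hψ0', Complex.one_cpow]
  -- h maps the ball into the unit ball
  have hmaps : Set.MapsTo h (Metric.ball (0:ℂ) R) (Metric.ball (h 0) 1) := by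
    intro z hz
    rw [hh0, Metric.mem_ball, dist_zero_right]
    rw [hhdef]
    simp only [norm_div]
    rw [div_lt_one (norm_pos_iff.mpr (hgne z hz))]
    have hx := hgre z hz
    rw [Complex.norm_def, Complex.norm_def]
    apply Real.sqrt_lt_sqrt (Complex.normSq_nonneg _)
    rw [Complex.normSq_apply, Complex.normSq_apply]
    simp only [Complex.sub_re, Complex.sub_im, Complex.add_re, Complex.add_im,
      Complex.one_re, Complex.one_im]
    nlinarith
  -- Schwarz lemma
  have schwarz := Complex.dist_le_div_mul_dist_of_mapsTo_ball hhdiff (hmaps.mono_right Metric.ball_subset_closedBall) h1ball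
  rw [hh0, dist_zero_right, dist_zero_right, norm_one, mul_one] at schwarz
  -- compute h 1
  set s : ℝ := Real.sqrt (1 + 1/ρ^2) with hsdef
  have hs1 : 1 < s := by
    rw [hsdef]
    have : (1:ℝ) < 1 + 1/ρ^2 := by
      have : 0 < 1/ρ^2 := by positivity
      linarith
    nlinarith [Real.sq_sqrt (by positivity : (0:ℝ) ≤ 1 + 1/ρ^2), Real.sqrt_nonneg (1 + 1/ρ^2)]
  have hg1 : g 1 = (s : ℂ) := by
    have hψ1 : ψ 1 = ((1 + 1/ρ^2 : ℝ) : ℂ) := by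
      simp only [hψdef, h1]
      push_cast
      field_simp
    rw [hgdef]
    simp only [hψ1]
    rw [show ((2:ℂ))⁻¹ = (((2:ℝ)⁻¹ : ℝ) : ℂ) by push_cast; ring]
    rw [← Complex.ofReal_cpow (by positivity)]
    rw [hsdef, Real.sqrt_eq_rpow]
    norm_num
  have hh1 : h 1 = (((s - 1)/(s + 1) : ℝ) : ℂ) := by
    rw [hhdef]
    simp only [hg1]
    push_cast
    ring
  have habs : ‖h 1‖ = (s - 1)/(s + 1) := by
    rw [hh1, Complex.norm_real, Real.norm_eq_abs, abs_of_nonneg (div_nonneg (by linarith) (by linarith))]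
  rw [habs] at schwarz
  -- conclude
  have hsle : s ≤ (R + 1)/(R - 1) := by
    rw [le_div_iff₀ (by linarith : (0:ℝ) < R - 1)]
    rw [div_le_div_iff₀ (by linarith) (by linarith : (0:ℝ) < R)] at schwarz
    nlinarith [schwarz]
  have hlog : Real.log s ≤ Real.log ((R + 1)/(R - 1)) :=
    Real.log_le_log (by linarith) hsle
  rw [hsdef, Real.log_sqrt (by positivity)] at hlog
  linarith
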